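/- Up to isomorphism, there is exactly one non-Lie nulfiliform Leibniz algebra of dimension n over ℂ, given by [e_i, e_1] = e_{i+1} for 1 ≤ i ≤ n−1 on a basis e₁,…,e_n (all other products zero). -/

import Mathlib

/-- The lower central series of a (Leibniz) bracket: `lcs b 0 = L = L¹`,
`lcs b k = L^{k+1} = [L^k, L]`. -/
noncomputable def lcs {L : Type*} [AddCommGroup L] [Module ℂ L]
    (b : L →ₗ[ℂ] L →ₗ[ℂ] L) : ℕ → Submodule ℂ L
  | 0 => ⊤
  | k + 1 => Submodule.span ℂ {z : L | ∃ x ∈ lcs b k, ∃ y : L, z = b x y}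

/-- Up to isomorphism there is exactly one non-Lie nulfiliform complex Leibniz
algebra of dimension `n`: every such algebra admits a basis `e₁, …, e_n` with
`[e_i, e_1] = e_{i+1}` for `1 ≤ i ≤ n − 1`, all other products zero. -/
theorem stmt_11 {L : Type*} [AddCommGroup L] [Module ℂ L] [FiniteDimensional ℂ L]
    (b : L →ₗ[ℂ] L →ₗ[ℂ] L)
    (hLeib : ∀ x y z : L, b x (b y z) = b (b x y) z - b (b x z) y)
    (n : ℕ) (hn : 0 < n) (hdim : Module.finrank ℂ L = n)
    (hnul : ∀ i : ℕ, 2 ≤ i → i ≤ n + 1 →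
      Module.finrank ℂ (lcs b (i - 1)) + i = n + 1)
    (hnonLie : ∃ x : L, b x x ≠ 0) :
    ∃ e : Module.Basis (Fin n) ℂ L, ∀ i j : Fin n,
      b (e i) (e j) =
        if (j : ℕ) = 0 then
          (if h : (i : ℕ) + 1 < n then e ⟨(i : ℕ) + 1, h⟩ else 0)
        else 0 := by
  classical
  -- basic facts about the lower central series
  have hsucc : ∀ k, lcs b (k + 1) =
      Submodule.span ℂ {z : L | ∃ x ∈ lcs b k, ∃ y : L, z = b x y} := fun k => rfl
  have hmem : ∀ k (x : L), x ∈ lcs b k → ∀ y : L, b x y ∈ lcs b (k + 1) := by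
    intro k x hx y
    rw [hsucc]
    exact Submodule.subset_span ⟨x, hx, y, rfl⟩
  have hmono : ∀ k, lcs b (k + 1) ≤ lcs b k := by
    intro k
    induction k with
    | zero => exact le_top
    | succ k ih =>
      rw [hsucc (k + 1)]
      apply Submodule.span_le.2
      rintro z ⟨x, hx, y, rfl⟩
      exact hmem k x (ih hx) y
  -- dimensions
  have hdim' : ∀ k, 1 ≤ k → k ≤ n → Module.finrank ℂ (lcs b k) + k = n := by
    intro k h1 h2
    have h : Module.finrank ℂ (lcs b k) + (k + 1) = n + 1 :=
      hnul (k + 1) (by omega) (by omega)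
    omega
  have hbot : lcs b n = ⊥ := by
    have h := hdim' n hn le_rfl
    have h0 : Module.finrank ℂ (lcs b n) = 0 := by omega
    exact Submodule.finrank_eq_zero.mp h0
  have hdim1 : Module.finrank ℂ (lcs b 1) + 1 = n := hdim' 1 le_rfl hn
  -- pick e₁ outside L²
  obtain ⟨e₁, he₁⟩ : ∃ x : L, x ∉ lcs b 1 := by
    by_contra h
    push_neg at h
    have htop : lcs b 1 = ⊤ := Submodule.eq_top_iff'.mpr h
    rw [htop, finrank_top] at hdim1
    omega
  -- the candidate basis vectors
  set f : ℕ → L := fun k => (fun x => b x e₁)^[k] e₁ with hf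
  have hf0 : f 0 = e₁ := rfl
  have hfs : ∀ k, f (k + 1) = b (f k) e₁ := fun k => Function.iterate_succ_apply' _ _ _
  have hfk : ∀ k, f k ∈ lcs b k := by
    intro k
    induction k with
    | zero => exact Submodule.mem_top
    | succ k ih => rw [hfs]; exact hmem k _ ih e₁
  -- decomposition at level 0
  have hC0 : (⊤ : Submodule ℂ L) = Submodule.span ℂ {f 0} ⊔ lcs b 1 := by
    have hlt : lcs b 1 < Submodule.span ℂ {f 0} ⊔ lcs b 1 := by
      refine lt_of_le_of_ne le_sup_right ?_
      intro h
      exact he₁ (h ▸ Submodule.mem_sup_left (Submodule.mem_span_singleton_self (f 0)))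
    have h2 : Module.finrank ℂ (lcs b 1) <
        Module.finrank ℂ ↥(Submodule.span ℂ {f 0} ⊔ lcs b 1) :=
      Submodule.finrank_lt_finrank_of_lt hlt
    have h3 : Module.finrank ℂ ↥(Submodule.span ℂ {f 0} ⊔ lcs b 1) ≤ n :=
      hdim ▸ Submodule.finrank_le _
    exact (Submodule.eq_top_of_finrank_eq (by omega)).symm
  -- [L^{k+1}, L²] ⊆ L^{k+3}
  have hB : ∀ k (x : L), x ∈ lcs b k → ∀ v ∈ lcs b 1, b x v ∈ lcs b (k + 2) := by
    intro k x hx v hv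
    rw [hsucc 0] at hv
    induction hv using Submodule.span_induction with
    | mem z hz =>
      obtain ⟨p, -, q, rfl⟩ := hz
      rw [hLeib x p q]
      exact sub_mem (hmem (k + 1) _ (hmem k x hx p) q) (hmem (k + 1) _ (hmem k x hx q) p)
    | zero => rw [map_zero]; exact Submodule.zero_mem _
    | add a c _ _ ha hc => rw [map_add]; exact add_mem ha hc
    | smul c a _ ha => rw [map_smul]; exact Submodule.smul_mem _ _ ha
  -- decomposition at every level
  have hC : ∀ k, lcs b k = Submodule.span ℂ {f k} ⊔ lcs b (k + 1) := by
    intro k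
    induction k with
    | zero => exact hC0
    | succ k ih =>
      apply le_antisymm
      · rw [hsucc k]
        apply Submodule.span_le.2
        rintro z ⟨x, hx, y, rfl⟩
        rw [ih] at hx
        obtain ⟨x₁, hx₁, w, hw, rfl⟩ := Submodule.mem_sup.mp hx
        obtain ⟨c, rfl⟩ := Submodule.mem_span_singleton.mp hx₁
        have hy : y ∈ Submodule.span ℂ {f 0} ⊔ lcs b 1 := hC0 ▸ Submodule.mem_top
        obtain ⟨y₁, hy₁, v, hv, rfl⟩ := Submodule.mem_sup.mp hy
        obtain ⟨d, rfl⟩ := Submodule.mem_span_singleton.mp hy₁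
        have h1 : b (f k) (d • f 0 + v) ∈
            Submodule.span ℂ {f (k + 1)} ⊔ lcs b (k + 1 + 1) := by
          rw [map_add, map_smul, hf0, ← hfs k]
          exact add_mem
            (Submodule.smul_mem _ _
              (Submodule.mem_sup_left (Submodule.mem_span_singleton_self _)))
            (Submodule.mem_sup_right (hB k _ (hfk k) v hv))
        have h2 : b w (d • f 0 + v) ∈
            Submodule.span ℂ {f (k + 1)} ⊔ lcs b (k + 1 + 1) :=
          Submodule.mem_sup_right (hmem (k + 1) w hw _)
        have hexp : b (c • f k + w) (d • f 0 + v)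
            = c • b (f k) (d • f 0 + v) + b w (d • f 0 + v) := by
          rw [map_add b, LinearMap.add_apply, map_smul b, LinearMap.smul_apply]
        rw [hexp]
        exact add_mem (Submodule.smul_mem _ _ h1) h2
      · refine sup_le ?_ (hmono (k + 1))
        rw [Submodule.span_singleton_le_iff_mem, hfs k]
        exact hmem k _ (hfk k) e₁
  -- the f i span L
  have hspan : ∀ k, k ≤ n →
      lcs b (n - k) ≤ Submodule.span ℂ (Set.range fun i : Fin n => f i) := by
    intro k
    induction k with
    | zero =>
      intro _
      rw [Nat.sub_zero, hbot]
      exact bot_le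
    | succ k ih =>
      intro hk1
      have hm : n - (k + 1) + 1 = n - k := by omega
      rw [hC (n - (k + 1))]
      apply sup_le
      · rw [Submodule.span_singleton_le_iff_mem]
        exact Submodule.subset_span ⟨⟨n - (k + 1), by omega⟩, rfl⟩
      · rw [hm]
        exact ih (by omega)
  have htop : ⊤ ≤ Submodule.span ℂ (Set.range fun i : Fin n => f i) := by
    have h := hspan n le_rfl
    rw [Nat.sub_self] at h
    exact h
  let e : Module.Basis (Fin n) ℂ L :=
    basisOfTopLeSpanOfCardEqFinrank (fun i : Fin n => f i) htop (by simp [hdim])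
  have hecoe : ∀ i : Fin n, e i = f i := fun i => by
    simp [e, coe_basisOfTopLeSpanOfCardEqFinrank]
  -- products
  have hfn : f n = 0 := by
    have h := hfk n
    rw [hbot] at h
    simpa using h
  have hz : ∀ j, 1 ≤ j → ∀ i, b (f i) (f j) = 0 := by
    intro j
    induction j with
    | zero => omega
    | succ j ih =>
      intro hj i
      by_cases h0 : j = 0
      · subst h0
        rw [hfs 0, hf0, hLeib (f i) e₁ e₁, sub_self]
      · have hj1 : 1 ≤ j := by omega
        rw [hfs j, hLeib (f i) (f j) e₁, ih hj1 i, ← hfs i, ih hj1 (i + 1), map_zero,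
          LinearMap.zero_apply, sub_zero]
  refine ⟨e, fun i j => ?_⟩
  by_cases hj : (j : ℕ) = 0
  · rw [if_pos hj]
    split_ifs with h
    · rw [hecoe i, hecoe j, hecoe ⟨(i : ℕ) + 1, h⟩, hj, hf0]
      exact (hfs (i : ℕ)).symm
    · rw [hecoe i, hecoe j, hj, hf0, ← hfs (i : ℕ)]
      have hin : (i : ℕ) + 1 = n := by
        have := i.isLt
        omega
      rw [hin, hfn]
  · rw [if_neg hj, hecoe i, hecoe j]
    exact hz (j : ℕ) (by omega) (i : ℕ)
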